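/- Corner maximum of the hitting-probability product (proof of Theorem 5.3): Let r, R, α > 0 with r·R ≤ α, let n ∈ ℕ and d_1, …, d_n ≥ 0, and set K = ∏_{t=1}^n (1 + r·d_t). Then ∏_{t=1}^n R/(R + d_t·α) ≤ r·R/(r·R + α·(K − 1)); that is, subject to the constraint ∏_{t=1}^n (1 + r·d_t) = K, the product is maximized when one d_t equals (K − 1)/r and all the others are 0. -/

import Mathlib

lemma stmt_9_aux (c : ℝ) (hc : 1 ≤ c) : ∀ (n : ℕ) (y : Fin n → ℝ), (∀ t, 0 ≤ y t) →
    1 + c * ((∏ t, (1 + y t)) - 1) ≤ ∏ t, (1 + c * y t) := by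
  intro n
  induction n with
  | zero => intro y hy; simp
  | succ n ih =>
    intro y hy
    rw [Fin.prod_univ_succ, Fin.prod_univ_succ]
    have hP : 1 ≤ ∏ t : Fin n, (1 + y (Fin.succ t)) := by
      calc (1:ℝ) = ∏ _t : Fin n, (1:ℝ) := by simp
        _ ≤ _ := Finset.prod_le_prod (by intros; norm_num) (by intro t _; linarith [hy t.succ])
    have hA := ih (fun t => y t.succ) (fun t => hy t.succ)
    set P := ∏ t : Fin n, (1 + y (Fin.succ t)) with hPdef
    set A := ∏ t : Fin n, (1 + c * y (Fin.succ t)) with hAdef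
    have h0 : 0 ≤ y 0 := hy 0
    have hc0 : (0:ℝ) ≤ c := le_trans zero_le_one hc
    have hAP : P ≤ A := by nlinarith [sub_nonneg.2 hP]
    nlinarith [mul_nonneg (mul_nonneg hc0 h0) (sub_nonneg.2 hAP)]

/-- Corner maximum of the hitting-probability product (proof of Theorem 5.3):
subject to `∏ (1 + r·d_t) = K`, the product `∏ R/(R + d_t·α)` is at most its
value at the corner where one `d_t` equals `(K − 1)/r` and the others vanish,
namely `r·R/(r·R + α·(K − 1))`. -/
theorem stmt_9 (r R α : ℝ) (hr : 0 < r) (hR : 0 < R) (hα : 0 < α) (hrR : r * R ≤ α)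
    (n : ℕ) (d : Fin n → ℝ) (hd : ∀ t, 0 ≤ d t) :
    ∏ t, R / (R + d t * α) ≤ r * R / (r * R + α * ((∏ t, (1 + r * d t)) - 1)) := by
  have hrR0 : 0 < r * R := mul_pos hr hR
  set c := α / (r * R) with hcdef
  have hc1 : 1 ≤ c := (one_le_div hrR0).2 hrR
  have hK : 1 ≤ ∏ t, (1 + r * d t) := by
    calc (1:ℝ) = ∏ _t : Fin n, (1:ℝ) := by simp
      _ ≤ _ := Finset.prod_le_prod (by intros; norm_num) (by intro t _; nlinarith [mul_nonneg hr.le (hd t)])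
  have haux := stmt_9_aux c hc1 n (fun t => r * d t) (fun t => mul_nonneg hr.le (hd t))
  set K := ∏ t, (1 + r * d t) with hKdef
  have heq : ∀ t, R / (R + d t * α) = (1 + c * (r * d t))⁻¹ := by
    intro t
    have h : 1 + c * (r * d t) = (R + d t * α) / R := by
      rw [hcdef]; field_simp
    rw [h, inv_div]
  have heq2 : r * R / (r * R + α * (K - 1)) = (1 + c * (K - 1))⁻¹ := by
    have h : 1 + c * (K - 1) = (r * R + α * (K - 1)) / (r * R) := by
      rw [hcdef]; field_simp
    rw [h, inv_div]
  rw [heq2]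
  calc ∏ t, R / (R + d t * α) = (∏ t, (1 + c * (r * d t)))⁻¹ := by
        rw [← Finset.prod_inv_distrib]; exact Finset.prod_congr rfl fun t _ => heq t
    _ ≤ (1 + c * (K - 1))⁻¹ := by
        apply inv_anti₀
        · nlinarith [sub_nonneg.2 hK]
        · linarith [haux]
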